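/- arXiv:math/0410130 — 4 statements merged into one kernel-verified Lean document; each statement's English description precedes it below -/
import Mathlib

section
/- The map ζ intertwines the multiplication of H: as k-linear maps H ⊗ H ⊗ A → A ⊗ H one has ζ ∘ (μ_H ⊗ id_A) = (id_A ⊗ μ_H) ∘ (ζ ⊗ id_H) ∘ (id_H ⊗ ζ). Equivalently, for all h, h' ∈ H and a ∈ A, writing ζ(h' ⊗ a) = Σ aᵢ ⊗ hᵢ, one has ζ(h h' ⊗ a) = Σ (id_A ⊗ μ_H)(ζ(h ⊗ aᵢ) ⊗ hᵢ). -/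
open TensorProduct

noncomputable section

universe u

variable {k A H X : Type u} [Field k]
  [Ring A] [Ring H] [Ring X]
  [Bialgebra k A] [Bialgebra k H] [Bialgebra k X]

/-- ζ : H ⊗ A → A ⊗ H, ζ(h ⊗ a) = ξ⁻¹(j_H(h) · j_A(a)). -/
def zetaF (jA : A →ₐc[k] X) (jH : H →ₐc[k] X) (ξ : (A ⊗[k] H) ≃ₗ[k] X) :
    H ⊗[k] A →ₗ[k] A ⊗[k] H :=
  ξ.symm.toLinearMap ∘ₗ LinearMap.mul' k X ∘ₗ
    TensorProduct.map (jH : H →ₗ[k] X) (jA : A →ₗ[k] X)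

lemma xi_zeta (jA : A →ₐc[k] X) (jH : H →ₐc[k] X) (ξ : (A ⊗[k] H) ≃ₗ[k] X)
    (h : H) (a : A) : ξ (zetaF jA jH ξ (h ⊗ₜ[k] a)) = jH h * jA a := by
  simp [zetaF]

lemma step0 (jA : A →ₐc[k] X) (jH : H →ₐc[k] X) (ξ : (A ⊗[k] H) ≃ₗ[k] X)
    (hξ : ∀ (a : A) (h : H), ξ (a ⊗ₜ[k] h) = jA a * jH h)
    (s : A ⊗[k] H) (h'' : H) :
    ξ (TensorProduct.map LinearMap.id (LinearMap.mul' k H)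
        ((TensorProduct.assoc k A H H) (s ⊗ₜ[k] h''))) = ξ s * jH h'' := by
  induction s using TensorProduct.induction_on with
  | zero => simp only [zero_tmul, LinearEquiv.map_zero, LinearMap.map_zero, zero_mul]
  | tmul a h => simp [hξ, map_mul, mul_assoc]
  | add x y hx hy =>
      simp only [add_tmul, map_add, hx, hy, add_mul]

lemma step1 (jA : A →ₐc[k] X) (jH : H →ₐc[k] X) (ξ : (A ⊗[k] H) ≃ₗ[k] X)
    (hξ : ∀ (a : A) (h : H), ξ (a ⊗ₜ[k] h) = jA a * jH h)
    (h : H) (t : A ⊗[k] H) :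
    ξ (TensorProduct.map LinearMap.id (LinearMap.mul' k H)
        ((TensorProduct.assoc k A H H)
          (TensorProduct.map (zetaF jA jH ξ) LinearMap.id
            ((TensorProduct.assoc k H A H).symm (h ⊗ₜ[k] t))))) = jH h * ξ t := by
  induction t using TensorProduct.induction_on with
  | zero => simp only [tmul_zero, LinearEquiv.map_zero, LinearMap.map_zero, mul_zero]
  | tmul a h'' =>
      have : (TensorProduct.assoc k H A H).symm (h ⊗ₜ[k] (a ⊗ₜ[k] h''))
          = (h ⊗ₜ[k] a) ⊗ₜ[k] h'' := rfl
      rw [this]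
      rw [TensorProduct.map_tmul]
      rw [step0 jA jH ξ hξ]
      simp [xi_zeta, hξ, mul_assoc]
  | add x y hx hy =>
      simp only [tmul_add, map_add, hx, hy, mul_add]

/-- ζ intertwines the multiplication of H:
ζ ∘ (μ_H ⊗ id_A) = (id_A ⊗ μ_H) ∘ (ζ ⊗ id_H) ∘ (id_H ⊗ ζ)
as k-linear maps (H ⊗ H) ⊗ A → A ⊗ H (with the canonical associators inserted). -/
theorem zeta_mul_H (jA : A →ₐc[k] X) (jH : H →ₐc[k] X) (ξ : (A ⊗[k] H) ≃ₗ[k] X)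
    (hξ : ∀ (a : A) (h : H), ξ (a ⊗ₜ[k] h) = jA a * jH h) :
    zetaF jA jH ξ ∘ₗ TensorProduct.map (LinearMap.mul' k H) LinearMap.id
      = TensorProduct.map LinearMap.id (LinearMap.mul' k H) ∘ₗ
        (TensorProduct.assoc k A H H).toLinearMap ∘ₗ
        TensorProduct.map (zetaF jA jH ξ) LinearMap.id ∘ₗ
        (TensorProduct.assoc k H A H).symm.toLinearMap ∘ₗ
        TensorProduct.map LinearMap.id (zetaF jA jH ξ) ∘ₗ
        (TensorProduct.assoc k H H A).toLinearMap := by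
  apply TensorProduct.ext
  apply TensorProduct.ext
  ext h h' a
  apply ξ.injective
  simp only [LinearMap.compr₂_apply, LinearMap.compr₂ₛₗ_apply, TensorProduct.mk_apply, LinearMap.comp_apply,
    TensorProduct.map_tmul, LinearEquiv.coe_coe, TensorProduct.assoc_tmul,
    LinearMap.id_coe, id_eq, LinearMap.mul'_apply]
  rw [xi_zeta, step1 jA jH ξ hξ, xi_zeta, map_mul, mul_assoc]
end
end

section
/- The map ζ is a coalgebra morphism from H ⊗ A to A ⊗ H: Δ_{A⊗H} ∘ ζ = (ζ ⊗ ζ) ∘ Δ_{H⊗A} as maps H ⊗ A → (A ⊗ H) ⊗ (A ⊗ H), and (ε_A ⊗ ε_H) ∘ ζ = ε_H ⊗ ε_A. -/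
open TensorProduct

noncomputable section

universe u

variable {k A H X : Type u} [Field k]
  [Ring A] [Ring H] [Ring X]
  [Bialgebra k A] [Bialgebra k H] [Bialgebra k X]

lemma tttComm_mul_aux (p q : X ⊗[k] X) :
    TensorProduct.map (LinearMap.mul' k X) (LinearMap.mul' k X)
      (Algebra.TensorProduct.tensorTensorTensorComm k k k k X X X X (p ⊗ₜ[k] q)) = p * q := by
  induction p using TensorProduct.induction_on with
  | zero => simp
  | tmul x₁ x₂ =>
    induction q using TensorProduct.induction_on with
    | zero => simp
    | tmul y₁ y₂ => simp [Algebra.TensorProduct.tmul_mul_tmul]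
    | add q₁ q₂ h₁ h₂ => simp only [tmul_add, map_add, mul_add, h₁, h₂]
  | add p₁ p₂ h₁ h₂ => simp only [add_tmul, map_add, add_mul, h₁, h₂]

/-- μ is a coalgebra morphism w.r.t. comultiplication. -/
lemma comul_comp_mul' :
    (Coalgebra.comul : X →ₗ[k] X ⊗[k] X) ∘ₗ LinearMap.mul' k X
      = TensorProduct.map (LinearMap.mul' k X) (LinearMap.mul' k X) ∘ₗ
        (Coalgebra.comul : X ⊗[k] X →ₗ[k] (X ⊗[k] X) ⊗[k] (X ⊗[k] X)) := by
  ext x y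
  simp only [AlgebraTensorModule.curry_apply, curry_apply, LinearMap.coe_restrictScalars,
    LinearMap.coe_comp, Function.comp_apply, LinearMap.mul'_apply]
  rw [Bialgebra.TensorProduct.comul_eq_algHom_toLinearMap]
  simp only [AlgHom.toLinearMap_apply, AlgHom.coe_comp, Function.comp_apply,
    Algebra.TensorProduct.map_tmul, Bialgebra.comulAlgHom_apply, AlgEquiv.toAlgHom_eq_coe,
    AlgHom.coe_coe]
  rw [AlgEquiv.coe_algHom, tttComm_mul_aux, Bialgebra.comul_mul]

/-- μ is a coalgebra morphism w.r.t. counit. -/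
lemma counit_comp_mul' :
    (Coalgebra.counit : X →ₗ[k] k) ∘ₗ LinearMap.mul' k X
      = (Coalgebra.counit : X ⊗[k] X →ₗ[k] k) := by
  ext x y
  simp only [AlgebraTensorModule.curry_apply, curry_apply, LinearMap.coe_restrictScalars,
    LinearMap.coe_comp, Function.comp_apply, LinearMap.mul'_apply]
  rw [Bialgebra.TensorProduct.counit_eq_algHom_toLinearMap]
  simp [Bialgebra.counit_mul, mul_comm]

/-- ζ is a coalgebra morphism from H ⊗ A to A ⊗ H (with the
tensor-product coalgebra structures): Δ_{A⊗H} ∘ ζ = (ζ ⊗ ζ) ∘ Δ_{H⊗A} and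
(ε_A ⊗ ε_H) ∘ ζ = ε_H ⊗ ε_A. -/
theorem zeta_coalgebra_morphism (jA : A →ₐc[k] X) (jH : H →ₐc[k] X)
    (ξ : (A ⊗[k] H) ≃ₗ[k] X)
    (hξ : ∀ (a : A) (h : H), ξ (a ⊗ₜ[k] h) = jA a * jH h) :
    (Coalgebra.comul : A ⊗[k] H →ₗ[k] (A ⊗[k] H) ⊗[k] (A ⊗[k] H)) ∘ₗ zetaF jA jH ξ
      = TensorProduct.map (zetaF jA jH ξ) (zetaF jA jH ξ) ∘ₗ
          (Coalgebra.comul : H ⊗[k] A →ₗ[k] (H ⊗[k] A) ⊗[k] (H ⊗[k] A)) ∧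
    (Coalgebra.counit : A ⊗[k] H →ₗ[k] k) ∘ₗ zetaF jA jH ξ
      = (Coalgebra.counit : H ⊗[k] A →ₗ[k] k) := by
  set mAH : A ⊗[k] H →ₗ[k] X ⊗[k] X :=
    TensorProduct.map (jA : A →ₗ[k] X) (jH : H →ₗ[k] X) with hmAH_def
  set mHA : H ⊗[k] A →ₗ[k] X ⊗[k] X :=
    TensorProduct.map (jH : H →ₗ[k] X) (jA : A →ₗ[k] X) with hmHA_def
  have hξlin : ξ.toLinearMap = LinearMap.mul' k X ∘ₗ mAH := by
    ext a h
    simp [hmAH_def, hξ]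
  -- coalgebra-morphism properties of the tensor maps
  have hmapHA : TensorProduct.map mHA mHA ∘ₗ
        (Coalgebra.comul : H ⊗[k] A →ₗ[k] (H ⊗[k] A) ⊗[k] (H ⊗[k] A))
      = (Coalgebra.comul : X ⊗[k] X →ₗ[k] (X ⊗[k] X) ⊗[k] (X ⊗[k] X)) ∘ₗ mHA :=
    (Coalgebra.TensorProduct.map (jH : H →ₗc[k] X) (jA : A →ₗc[k] X)).map_comp_comul
  have hmapAH : TensorProduct.map mAH mAH ∘ₗ
        (Coalgebra.comul : A ⊗[k] H →ₗ[k] (A ⊗[k] H) ⊗[k] (A ⊗[k] H))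
      = (Coalgebra.comul : X ⊗[k] X →ₗ[k] (X ⊗[k] X) ⊗[k] (X ⊗[k] X)) ∘ₗ mAH :=
    (Coalgebra.TensorProduct.map (jA : A →ₗc[k] X) (jH : H →ₗc[k] X)).map_comp_comul
  have hcmapHA : (Coalgebra.counit : X ⊗[k] X →ₗ[k] k) ∘ₗ mHA
      = (Coalgebra.counit : H ⊗[k] A →ₗ[k] k) :=
    (Coalgebra.TensorProduct.map (jH : H →ₗc[k] X) (jA : A →ₗc[k] X)).counit_comp
  have hcmapAH : (Coalgebra.counit : X ⊗[k] X →ₗ[k] k) ∘ₗ mAH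
      = (Coalgebra.counit : A ⊗[k] H →ₗ[k] k) :=
    (Coalgebra.TensorProduct.map (jA : A →ₗc[k] X) (jH : H →ₗc[k] X)).counit_comp
  set μ : X ⊗[k] X →ₗ[k] X := LinearMap.mul' k X with hμ_def
  set η : H ⊗[k] A →ₗ[k] X := μ ∘ₗ mHA with hη_def
  have e1 : ξ.symm.toLinearMap ∘ₗ ξ.toLinearMap = LinearMap.id := by ext x; simp
  have e2 : ξ.toLinearMap ∘ₗ ξ.symm.toLinearMap = LinearMap.id := by ext x; simp
  -- ξ is a coalgebra morphism
  have hξΔ : (Coalgebra.comul : X →ₗ[k] X ⊗[k] X) ∘ₗ ξ.toLinearMap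
      = TensorProduct.map ξ.toLinearMap ξ.toLinearMap ∘ₗ
        (Coalgebra.comul : A ⊗[k] H →ₗ[k] (A ⊗[k] H) ⊗[k] (A ⊗[k] H)) := by
    rw [hξlin, ← LinearMap.comp_assoc, comul_comp_mul', LinearMap.comp_assoc, ← hmapAH,
      ← LinearMap.comp_assoc, ← TensorProduct.map_comp]
  have hξε : (Coalgebra.counit : X →ₗ[k] k) ∘ₗ ξ.toLinearMap
      = (Coalgebra.counit : A ⊗[k] H →ₗ[k] k) := by
    rw [hξlin, ← LinearMap.comp_assoc, counit_comp_mul', hcmapAH]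
  -- η is a coalgebra morphism
  have hηΔ : (Coalgebra.comul : X →ₗ[k] X ⊗[k] X) ∘ₗ η
      = TensorProduct.map η η ∘ₗ
        (Coalgebra.comul : H ⊗[k] A →ₗ[k] (H ⊗[k] A) ⊗[k] (H ⊗[k] A)) := by
    rw [hη_def, ← LinearMap.comp_assoc, comul_comp_mul', LinearMap.comp_assoc, ← hmapHA,
      ← LinearMap.comp_assoc, ← TensorProduct.map_comp]
  have hηε : (Coalgebra.counit : X →ₗ[k] k) ∘ₗ η
      = (Coalgebra.counit : H ⊗[k] A →ₗ[k] k) := by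
    rw [hη_def, ← LinearMap.comp_assoc, counit_comp_mul', hcmapHA]
  -- ξ.symm is a coalgebra morphism
  have hsymmΔ : (Coalgebra.comul : A ⊗[k] H →ₗ[k] (A ⊗[k] H) ⊗[k] (A ⊗[k] H)) ∘ₗ
        ξ.symm.toLinearMap
      = TensorProduct.map ξ.symm.toLinearMap ξ.symm.toLinearMap ∘ₗ
        (Coalgebra.comul : X →ₗ[k] X ⊗[k] X) := by
    calc (Coalgebra.comul : A ⊗[k] H →ₗ[k] _) ∘ₗ ξ.symm.toLinearMap
        = ((TensorProduct.map ξ.symm.toLinearMap ξ.symm.toLinearMap ∘ₗ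
            TensorProduct.map ξ.toLinearMap ξ.toLinearMap) ∘ₗ Coalgebra.comul) ∘ₗ
            ξ.symm.toLinearMap := by
          rw [← TensorProduct.map_comp, e1, TensorProduct.map_id, LinearMap.id_comp]
      _ = (TensorProduct.map ξ.symm.toLinearMap ξ.symm.toLinearMap ∘ₗ
            (TensorProduct.map ξ.toLinearMap ξ.toLinearMap ∘ₗ Coalgebra.comul)) ∘ₗ
            ξ.symm.toLinearMap := by simp only [LinearMap.comp_assoc]
      _ = (TensorProduct.map ξ.symm.toLinearMap ξ.symm.toLinearMap ∘ₗ
            (Coalgebra.comul ∘ₗ ξ.toLinearMap)) ∘ₗ ξ.symm.toLinearMap := by rw [hξΔ]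
      _ = TensorProduct.map ξ.symm.toLinearMap ξ.symm.toLinearMap ∘ₗ
            Coalgebra.comul ∘ₗ (ξ.toLinearMap ∘ₗ ξ.symm.toLinearMap) := by
          simp only [LinearMap.comp_assoc]
      _ = TensorProduct.map ξ.symm.toLinearMap ξ.symm.toLinearMap ∘ₗ Coalgebra.comul := by
          rw [e2, LinearMap.comp_id]
  have hsymmε : (Coalgebra.counit : A ⊗[k] H →ₗ[k] k) ∘ₗ ξ.symm.toLinearMap
      = (Coalgebra.counit : X →ₗ[k] k) := by
    rw [← hξε, LinearMap.comp_assoc, e2, LinearMap.comp_id]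
  have hζ : zetaF jA jH ξ = ξ.symm.toLinearMap ∘ₗ η := rfl
  constructor
  · rw [hζ, ← LinearMap.comp_assoc, hsymmΔ, LinearMap.comp_assoc, hηΔ,
      ← LinearMap.comp_assoc, ← TensorProduct.map_comp]
  · rw [hζ, ← LinearMap.comp_assoc, hsymmε, hηε]
end
end

section
/- The pair (H, β) is an A-module coalgebra (with A acting on the right): for all h, h' ∈ H and a, a' ∈ A, (i) β(h ⊗ a a') = β(β(h ⊗ a) ⊗ a'); (ii) β(h ⊗ 1_A) = h; (iii) ε_H(β(h ⊗ a)) = ε_H(h)·ε_A(a); (iv) Δ_H(β(h ⊗ a)) = Σ β(h₁ ⊗ a₁) ⊗ β(h₂ ⊗ a₂). -/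
open TensorProduct

set_option synthInstance.maxHeartbeats 1000000
set_option maxHeartbeats 1000000

noncomputable section

universe u

variable {k A H X : Type u} [Field k]
  [Ring A] [Ring H] [Ring X]
  [Bialgebra k A] [Bialgebra k H] [Bialgebra k X]

/-- α := (id_A ⊗ ε_H) ∘ ζ. -/
def alphaF (jA : A →ₐc[k] X) (jH : H →ₐc[k] X) (ξ : (A ⊗[k] H) ≃ₗ[k] X) :
    H ⊗[k] A →ₗ[k] A :=
  (TensorProduct.rid k A).toLinearMap ∘ₗ
    TensorProduct.map LinearMap.id Coalgebra.counit ∘ₗ zetaF jA jH ξ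

/-- β := (ε_A ⊗ id_H) ∘ ζ. -/
def betaF (jA : A →ₐc[k] X) (jH : H →ₐc[k] X) (ξ : (A ⊗[k] H) ≃ₗ[k] X) :
    H ⊗[k] A →ₗ[k] H :=
  (TensorProduct.lid k H).toLinearMap ∘ₗ
    TensorProduct.map Coalgebra.counit LinearMap.id ∘ₗ zetaF jA jH ξ

/-- The collapse map G = (ε_A ⊗ id_H) : A ⊗ H → H. -/
def GmF : A ⊗[k] H →ₗ[k] H :=
  (TensorProduct.lid k H).toLinearMap ∘ₗ
    TensorProduct.map Coalgebra.counit LinearMap.id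

lemma GmF_tmul (a : A) (h : H) :
    GmF (k := k) (a ⊗ₜ[k] h) = Coalgebra.counit (R := k) a • h := by
  simp [GmF]

section

variable (jA : A →ₐc[k] X) (jH : H →ₐc[k] X) (ξ : (A ⊗[k] H) ≃ₗ[k] X)

lemma zetaF_tmul (h : H) (a : A) :
    zetaF jA jH ξ (h ⊗ₜ[k] a) = ξ.symm (jH h * jA a) := by
  simp [zetaF, LinearMap.mul'_apply]

lemma xi_zetaF (h : H) (a : A) :
    ξ (zetaF jA jH ξ (h ⊗ₜ[k] a)) = jH h * jA a := by
  rw [zetaF_tmul]; exact ξ.apply_symm_apply _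

lemma betaF_eq : betaF jA jH ξ = GmF ∘ₗ zetaF jA jH ξ := rfl

lemma betaF_apply (w : H ⊗[k] A) :
    betaF jA jH ξ w = GmF (zetaF jA jH ξ w) := rfl

variable (hξ : ∀ (a : A) (h : H), ξ (a ⊗ₜ[k] h) = jA a * jH h)

include hξ

lemma Gm_smul_lemma (b : A) (u : A ⊗[k] H) :
    GmF (ξ.symm ((jA b : X) * ξ u)) = Coalgebra.counit (R := k) b • GmF (k := k) u := by
  induction u using TensorProduct.induction_on with
  | zero => simp
  | tmul c g =>
      rw [hξ, ← mul_assoc, ← map_mul, ← hξ, ξ.symm_apply_apply, GmF_tmul, GmF_tmul,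
        Bialgebra.counit_mul, mul_smul]
  | add x y hx hy => simp only [map_add, mul_add, hx, hy, smul_add]

lemma key1 (a' : A) (w : A ⊗[k] H) :
    GmF (ξ.symm ((ξ w) * jA a')) = GmF (zetaF jA jH ξ (GmF (k := k) w ⊗ₜ[k] a')) := by
  induction w using TensorProduct.induction_on with
  | zero => simp
  | tmul b g =>
      rw [hξ, mul_assoc, ← xi_zetaF jA jH ξ g a', Gm_smul_lemma jA jH ξ hξ, GmF_tmul,
        ← TensorProduct.smul_tmul', map_smul, map_smul]
  | add x y hx hy =>
      simp only [map_add, add_mul, TensorProduct.add_tmul, hx, hy]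

lemma counit_xi (w : A ⊗[k] H) :
    Coalgebra.counit (R := k) (GmF (k := k) w) = Coalgebra.counit (R := k) (ξ w) := by
  induction w using TensorProduct.induction_on with
  | zero => simp
  | tmul a h =>
      rw [hξ, GmF_tmul, map_smul, Bialgebra.counit_mul,
        CoalgHomClass.counit_comp_apply, CoalgHomClass.counit_comp_apply, smul_eq_mul]
  | add x y hx hy => simp only [map_add, hx, hy]

omit hξ in
lemma mapxi_inj :
    Function.Injective (TensorProduct.map (ξ.toLinearMap) (ξ.toLinearMap)) := by
  have h : ∀ z : (A ⊗[k] H) ⊗[k] (A ⊗[k] H),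
      TensorProduct.map ξ.symm.toLinearMap ξ.symm.toLinearMap
        (TensorProduct.map ξ.toLinearMap ξ.toLinearMap z) = z := by
    intro z
    induction z using TensorProduct.induction_on with
    | zero => simp
    | tmul x y => simp
    | add x y hx hy => simp only [map_add, hx, hy]
  exact Function.LeftInverse.injective h

lemma bil1 (u : A ⊗[k] A) (v : H ⊗[k] H) :
    TensorProduct.map (ξ.toLinearMap) (ξ.toLinearMap)
        (TensorProduct.tensorTensorTensorComm k A A H H (u ⊗ₜ[k] v))
      = (TensorProduct.map (jA : A →ₗ[k] X) (jA : A →ₗ[k] X) u)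
        * (TensorProduct.map (jH : H →ₗ[k] X) (jH : H →ₗ[k] X) v) := by
  induction u using TensorProduct.induction_on with
  | zero => simp
  | tmul a1 a2 =>
      induction v using TensorProduct.induction_on with
      | zero => simp
      | tmul h1 h2 =>
          simp [TensorProduct.tensorTensorTensorComm_tmul, hξ,
            Algebra.TensorProduct.tmul_mul_tmul]
      | add x y hx hy =>
          simp only [TensorProduct.tmul_add, map_add, mul_add, hx, hy]
  | add x y hx hy =>
      simp only [TensorProduct.add_tmul, map_add, add_mul, hx, hy]

lemma xi_comul (w : A ⊗[k] H) :
    Coalgebra.comul (R := k) (ξ w)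
      = TensorProduct.map (ξ.toLinearMap) (ξ.toLinearMap) (Coalgebra.comul (R := k) w) := by
  induction w using TensorProduct.induction_on with
  | zero => simp
  | tmul a h =>
      have hc : Coalgebra.comul (R := k) (a ⊗ₜ[k] h)
          = TensorProduct.tensorTensorTensorComm k A A H H
              (Coalgebra.comul (R := k) a ⊗ₜ[k] Coalgebra.comul (R := k) h) := by
        simp [TensorProduct.comul_def, AlgebraTensorModule.tensorTensorTensorComm_eq]
      rw [hξ, Bialgebra.comul_mul, hc, bil1 jA jH ξ hξ,
        ← CoalgHomClass.map_comp_comul_apply jA, ← CoalgHomClass.map_comp_comul_apply jH]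
  | add x y hx hy => simp only [map_add, hx, hy]

omit hξ in
lemma bil2 (u : H ⊗[k] H) (v : A ⊗[k] A) :
    TensorProduct.map (ξ.toLinearMap) (ξ.toLinearMap)
        (TensorProduct.map (zetaF jA jH ξ) (zetaF jA jH ξ)
          (TensorProduct.tensorTensorTensorComm k H H A A (u ⊗ₜ[k] v)))
      = (TensorProduct.map (jH : H →ₗ[k] X) (jH : H →ₗ[k] X) u)
        * (TensorProduct.map (jA : A →ₗ[k] X) (jA : A →ₗ[k] X) v) := by
  induction u using TensorProduct.induction_on with
  | zero => simp
  | tmul h1 h2 =>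
      induction v using TensorProduct.induction_on with
      | zero => simp
      | tmul a1 a2 =>
          simp [TensorProduct.tensorTensorTensorComm_tmul, xi_zetaF,
            Algebra.TensorProduct.tmul_mul_tmul]
      | add x y hx hy =>
          simp only [TensorProduct.tmul_add, map_add, mul_add, hx, hy]
  | add x y hx hy =>
      simp only [TensorProduct.add_tmul, map_add, add_mul, hx, hy]

lemma zeta_comul (h : H) (a : A) :
    Coalgebra.comul (R := k) (zetaF jA jH ξ (h ⊗ₜ[k] a))
      = TensorProduct.map (zetaF jA jH ξ) (zetaF jA jH ξ)
          (Coalgebra.comul (R := k) (h ⊗ₜ[k] a)) := by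
  apply mapxi_inj ξ
  have hc : Coalgebra.comul (R := k) (h ⊗ₜ[k] a)
      = TensorProduct.tensorTensorTensorComm k H H A A
          (Coalgebra.comul (R := k) h ⊗ₜ[k] Coalgebra.comul (R := k) a) := by
    simp [TensorProduct.comul_def, AlgebraTensorModule.tensorTensorTensorComm_eq]
  rw [← xi_comul jA jH ξ hξ, xi_zetaF, Bialgebra.comul_mul, hc, bil2 jA jH ξ,
    ← CoalgHomClass.map_comp_comul_apply jH, ← CoalgHomClass.map_comp_comul_apply jA]

end

lemma counitAA (a : A) :
    LinearMap.mul' k k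
        (TensorProduct.map (Coalgebra.counit) (Coalgebra.counit) (Coalgebra.comul (R := k) a))
      = Coalgebra.counit (R := k) a := by
  have h1 : TensorProduct.map (Coalgebra.counit) (Coalgebra.counit) (Coalgebra.comul (R := k) a)
      = (Coalgebra.counit (R := k) (A := A)).lTensor k
          ((Coalgebra.counit (R := k) (A := A)).rTensor A (Coalgebra.comul (R := k) a)) := by
    exact (LinearMap.congr_fun (LinearMap.lTensor_comp_rTensor _ _ _) _).symm
  rw [h1, Coalgebra.rTensor_counit_comul]
  simp [LinearMap.mul'_apply]

lemma bil3 (u : A ⊗[k] A) (v : H ⊗[k] H) :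
    TensorProduct.map (GmF (k := k)) (GmF (k := k))
        (TensorProduct.tensorTensorTensorComm k A A H H (u ⊗ₜ[k] v))
      = (LinearMap.mul' k k
          (TensorProduct.map (Coalgebra.counit) (Coalgebra.counit) u)) • v := by
  induction u using TensorProduct.induction_on with
  | zero => simp
  | tmul a1 a2 =>
      induction v using TensorProduct.induction_on with
      | zero => simp
      | tmul h1 h2 =>
          simp only [TensorProduct.tensorTensorTensorComm_tmul, TensorProduct.map_tmul,
            GmF_tmul, LinearMap.mul'_apply, TensorProduct.smul_tmul',
            TensorProduct.tmul_smul, smul_smul]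
          rw [mul_comm]
      | add x y hx hy =>
          simp only [TensorProduct.tmul_add, map_add, smul_add, hx, hy]
  | add x y hx hy =>
      simp only [TensorProduct.add_tmul, map_add, add_smul, hx, hy]

lemma Gm_comul (w : A ⊗[k] H) :
    Coalgebra.comul (R := k) (GmF (k := k) w)
      = TensorProduct.map (GmF (k := k)) (GmF (k := k)) (Coalgebra.comul (R := k) w) := by
  induction w using TensorProduct.induction_on with
  | zero => simp
  | tmul a h =>
      have hc : Coalgebra.comul (R := k) (a ⊗ₜ[k] h)
          = TensorProduct.tensorTensorTensorComm k A A H H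
              (Coalgebra.comul (R := k) a ⊗ₜ[k] Coalgebra.comul (R := k) h) := by
        simp [TensorProduct.comul_def, AlgebraTensorModule.tensorTensorTensorComm_eq]
      rw [GmF_tmul, map_smul, hc, bil3, counitAA]
  | add x y hx hy => simp only [map_add, hx, hy]

/-- (H, β) is an A-module coalgebra (with A acting on the right). -/
theorem beta_module_coalgebra (jA : A →ₐc[k] X) (jH : H →ₐc[k] X)
    (ξ : (A ⊗[k] H) ≃ₗ[k] X)
    (hξ : ∀ (a : A) (h : H), ξ (a ⊗ₜ[k] h) = jA a * jH h) :
    ∀ (h h' : H) (a a' : A),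
      betaF jA jH ξ (h ⊗ₜ[k] (a * a'))
        = betaF jA jH ξ (betaF jA jH ξ (h ⊗ₜ[k] a) ⊗ₜ[k] a') ∧
      betaF jA jH ξ (h ⊗ₜ[k] (1 : A)) = h ∧
      Coalgebra.counit (R := k) (betaF jA jH ξ (h ⊗ₜ[k] a))
        = Coalgebra.counit (R := k) h * Coalgebra.counit (R := k) a ∧
      Coalgebra.comul (R := k) (betaF jA jH ξ (h ⊗ₜ[k] a))
        = TensorProduct.map (betaF jA jH ξ) (betaF jA jH ξ)
            (Coalgebra.comul (R := k) (h ⊗ₜ[k] a)) := by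
  intro h h' a a'
  refine ⟨?_, ?_, ?_, ?_⟩
  · -- (i)
    rw [betaF_apply, betaF_apply, betaF_apply, zetaF_tmul, map_mul jA a a', ← mul_assoc,
      ← xi_zetaF jA jH ξ h a, key1 jA jH ξ hξ a', zetaF_tmul]
  · -- (ii)
    rw [betaF_apply, zetaF_tmul, map_one, mul_one]
    have : (jH h : X) = ξ ((1 : A) ⊗ₜ[k] h) := by rw [hξ, map_one, one_mul]
    rw [this, ξ.symm_apply_apply, GmF_tmul, Bialgebra.counit_one, one_smul]
  · -- (iii)
    rw [betaF_apply, counit_xi jA jH ξ hξ, xi_zetaF, Bialgebra.counit_mul,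
      CoalgHomClass.counit_comp_apply, CoalgHomClass.counit_comp_apply]
  · -- (iv)
    rw [betaF_apply, Gm_comul, zeta_comul jA jH ξ hξ, ← LinearMap.comp_apply,
      ← TensorProduct.map_comp, ← betaF_eq]
end
end

section
/- The double cross product multiplication m_D is associative with unit 1_A ⊗ 1_H: as k-linear maps, m_D ∘ (m_D ⊗ id_{A⊗H}) = m_D ∘ (id_{A⊗H} ⊗ m_D), and m_D((1_A ⊗ 1_H) ⊗ u) = u = m_D(u ⊗ (1_A ⊗ 1_H)) for all u ∈ A ⊗ H. -/
open TensorProduct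

noncomputable section

set_option maxHeartbeats 1000000
set_option synthInstance.maxHeartbeats 200000

universe u

variable {k A H X : Type u} [Field k]
  [Ring A] [Ring H] [Ring X]
  [Bialgebra k A] [Bialgebra k H] [Bialgebra k X]

/-- The map H ⊗ A → A ⊗ H, h ⊗ a ↦ Σ α(h₁ ⊗ a₁) ⊗ β(h₂ ⊗ a₂). -/
def zetaAB (jA : A →ₐc[k] X) (jH : H →ₐc[k] X) (ξ : (A ⊗[k] H) ≃ₗ[k] X) :
    H ⊗[k] A →ₗ[k] A ⊗[k] H :=
  TensorProduct.map (alphaF jA jH ξ) (betaF jA jH ξ) ∘ₗ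
    (Coalgebra.comul : H ⊗[k] A →ₗ[k] (H ⊗[k] A) ⊗[k] (H ⊗[k] A))

/-- The double cross product multiplication m_D on A ⊗ H:
m_D((a ⊗ h) ⊗ (a' ⊗ h')) = Σ a·α(h₁ ⊗ a'₁) ⊗ β(h₂ ⊗ a'₂)·h'. -/
def mD (jA : A →ₐc[k] X) (jH : H →ₐc[k] X) (ξ : (A ⊗[k] H) ≃ₗ[k] X) :
    (A ⊗[k] H) ⊗[k] (A ⊗[k] H) →ₗ[k] A ⊗[k] H :=
  TensorProduct.map (LinearMap.mul' k A) LinearMap.id ∘ₗ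
  (TensorProduct.assoc k A A H).symm.toLinearMap ∘ₗ
  TensorProduct.map LinearMap.id
    (TensorProduct.map LinearMap.id (LinearMap.mul' k H) ∘ₗ
     (TensorProduct.assoc k A H H).toLinearMap ∘ₗ
     TensorProduct.map (zetaAB jA jH ξ) LinearMap.id ∘ₗ
     (TensorProduct.assoc k H A H).symm.toLinearMap) ∘ₗ
  (TensorProduct.assoc k A H (A ⊗[k] H)).toLinearMap

/-! ### Auxiliary lemmas -/

lemma aux_sum_counit_right_smul {a : A} (r : Coalgebra.Repr k a (A × A)) :
    ∑ i ∈ r.index, Coalgebra.counit (R := k) (r.right i) • r.left i = a := by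
  have h := congrArg (TensorProduct.rid k A) (Coalgebra.sum_tmul_counit_eq r)
  simp only [map_sum, TensorProduct.rid_tmul, one_smul] at h
  simpa using h

lemma aux_sum_counit_left_smul {a : A} (r : Coalgebra.Repr k a (A × A)) :
    ∑ i ∈ r.index, Coalgebra.counit (R := k) (r.left i) • r.right i = a := by
  have h := congrArg (TensorProduct.lid k A) (Coalgebra.sum_counit_tmul_eq r)
  simp only [map_sum, TensorProduct.lid_tmul, one_smul] at h
  simpa using h

lemma aux_key_comul_mul (f : A →ₐc[k] X) (g : H →ₐc[k] X) :
    Coalgebra.comul ∘ₗ LinearMap.mul' k X ∘ₗ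
        TensorProduct.map (f : A →ₗ[k] X) (g : H →ₗ[k] X)
      = TensorProduct.map
          (LinearMap.mul' k X ∘ₗ TensorProduct.map (f : A →ₗ[k] X) (g : H →ₗ[k] X))
          (LinearMap.mul' k X ∘ₗ TensorProduct.map (f : A →ₗ[k] X) (g : H →ₗ[k] X))
        ∘ₗ (Coalgebra.comul : A ⊗[k] H →ₗ[k] (A ⊗[k] H) ⊗[k] (A ⊗[k] H)) := by
  apply TensorProduct.ext'
  intro a h
  have ra := Coalgebra.Repr.arbitrary k a
  have rh := Coalgebra.Repr.arbitrary k h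
  have hra : Coalgebra.comul (R := k) a = ∑ i ∈ ra.index, ra.left i ⊗ₜ[k] ra.right i := ra.eq.symm
  have hrh : Coalgebra.comul (R := k) h = ∑ j ∈ rh.index, rh.left j ⊗ₜ[k] rh.right j := rh.eq.symm
  have hcomul : Coalgebra.comul (R := k) (a ⊗ₜ[k] h)
      = TensorProduct.tensorTensorTensorComm k A A H H
          (Coalgebra.comul (R := k) a ⊗ₜ[k] Coalgebra.comul (R := k) h) := rfl
  have hcf : ⇑(f : A →ₗ[k] X) = ⇑f := rfl
  have hcg : ⇑(g : H →ₗ[k] X) = ⇑g := rfl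
  have h1 : Coalgebra.comul (R := k) (f a)
      = ∑ i ∈ ra.index, f (ra.left i) ⊗ₜ[k] f (ra.right i) := by
    rw [← CoalgHomClass.map_comp_comul_apply f a, hra, map_sum]
    simp
  have h2 : Coalgebra.comul (R := k) (g h)
      = ∑ j ∈ rh.index, g (rh.left j) ⊗ₜ[k] g (rh.right j) := by
    rw [← CoalgHomClass.map_comp_comul_apply g h, hrh, map_sum]
    simp
  simp only [LinearMap.coe_comp, Function.comp_apply, TensorProduct.map_tmul,
    LinearMap.mul'_apply, hcf, hcg, Bialgebra.comul_mul, h1, h2,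
    hcomul, hra, hrh, TensorProduct.sum_tmul, TensorProduct.tmul_sum, map_sum,
    TensorProduct.tensorTensorTensorComm_tmul, TensorProduct.map_tmul,
    Finset.sum_mul_sum, Algebra.TensorProduct.tmul_mul_tmul]
  rw [Finset.sum_comm]

lemma aux_key_counit (f : A →ₐc[k] X) (g : H →ₐc[k] X) :
    LinearMap.mul' k X ∘ₗ TensorProduct.map
        ((f : A →ₗ[k] X) ∘ₗ (TensorProduct.rid k A).toLinearMap ∘ₗ
          TensorProduct.map LinearMap.id Coalgebra.counit)
        ((g : H →ₗ[k] X) ∘ₗ (TensorProduct.lid k H).toLinearMap ∘ₗ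
          TensorProduct.map Coalgebra.counit LinearMap.id)
      ∘ₗ (Coalgebra.comul : A ⊗[k] H →ₗ[k] (A ⊗[k] H) ⊗[k] (A ⊗[k] H))
      = LinearMap.mul' k X ∘ₗ TensorProduct.map (f : A →ₗ[k] X) (g : H →ₗ[k] X) := by
  apply TensorProduct.ext'
  intro a h
  have ra := Coalgebra.Repr.arbitrary k a
  have rh := Coalgebra.Repr.arbitrary k h
  have hra : Coalgebra.comul (R := k) a = ∑ i ∈ ra.index, ra.left i ⊗ₜ[k] ra.right i := ra.eq.symm
  have hrh : Coalgebra.comul (R := k) h = ∑ j ∈ rh.index, rh.left j ⊗ₜ[k] rh.right j := rh.eq.symm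
  have hcomul : Coalgebra.comul (R := k) (a ⊗ₜ[k] h)
      = TensorProduct.tensorTensorTensorComm k A A H H
          (Coalgebra.comul (R := k) a ⊗ₜ[k] Coalgebra.comul (R := k) h) := rfl
  have hcf : ⇑(f : A →ₗ[k] X) = ⇑f := rfl
  have hcg : ⇑(g : H →ₗ[k] X) = ⇑g := rfl
  have hfa : f a = ∑ i ∈ ra.index, Coalgebra.counit (R := k) (ra.right i) • f (ra.left i) := by
    conv_lhs => rw [← aux_sum_counit_right_smul ra]
    rw [map_sum]; simp
  have hgh : g h = ∑ j ∈ rh.index, Coalgebra.counit (R := k) (rh.left j) • g (rh.right j) := by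
    conv_lhs => rw [← aux_sum_counit_left_smul rh]
    rw [map_sum]; simp
  simp only [LinearMap.coe_comp, Function.comp_apply, TensorProduct.map_tmul,
    LinearMap.mul'_apply, hcf, hcg, hcomul, hra, hrh,
    TensorProduct.sum_tmul, TensorProduct.tmul_sum, map_sum,
    TensorProduct.tensorTensorTensorComm_tmul, TensorProduct.map_tmul,
    LinearMap.id_coe, id_eq, LinearEquiv.coe_coe, TensorProduct.rid_tmul,
    TensorProduct.lid_tmul, map_smul, hfa, hgh, Finset.sum_mul_sum]
  refine Finset.sum_congr rfl fun j _ => Finset.sum_congr rfl fun i _ => ?_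
  simp [smul_mul_assoc, mul_smul_comm, smul_smul, mul_comm]

variable (jA : A →ₐc[k] X) (jH : H →ₐc[k] X) (ξ : (A ⊗[k] H) ≃ₗ[k] X)

lemma aux_xi_eq (hξ : ∀ (a : A) (h : H), ξ (a ⊗ₜ[k] h) = jA a * jH h) :
    ξ.toLinearMap
      = LinearMap.mul' k X ∘ₗ TensorProduct.map (jA : A →ₗ[k] X) (jH : H →ₗ[k] X) := by
  apply TensorProduct.ext'
  intro a h
  have hcf : ⇑(jA : A →ₗ[k] X) = ⇑jA := rfl
  have hcg : ⇑(jH : H →ₗ[k] X) = ⇑jH := rfl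
  simp [hξ a h, hcf, hcg]

lemma aux_xi_comp_zetaF :
    ξ.toLinearMap ∘ₗ zetaF jA jH ξ
      = LinearMap.mul' k X ∘ₗ TensorProduct.map (jH : H →ₗ[k] X) (jA : A →ₗ[k] X) := by
  refine LinearMap.ext fun t => ?_
  simp [zetaF]

lemma aux_map_xi_inj :
    Function.Injective ⇑(TensorProduct.map ξ.toLinearMap ξ.toLinearMap) := by
  have : ⇑(TensorProduct.map ξ.toLinearMap ξ.toLinearMap)
      = ⇑(TensorProduct.congr ξ ξ) := rfl
  rw [this]
  exact (TensorProduct.congr ξ ξ).injective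

/-- ζ is a coalgebra morphism (comultiplication part). -/
lemma aux_zetaF_comul (hξ : ∀ (a : A) (h : H), ξ (a ⊗ₜ[k] h) = jA a * jH h) :
    Coalgebra.comul ∘ₗ zetaF jA jH ξ
      = TensorProduct.map (zetaF jA jH ξ) (zetaF jA jH ξ) ∘ₗ
          (Coalgebra.comul : H ⊗[k] A →ₗ[k] (H ⊗[k] A) ⊗[k] (H ⊗[k] A)) := by
  have hinj := aux_map_xi_inj ξ
  refine LinearMap.ext fun t => hinj ?_
  have e1 : TensorProduct.map ξ.toLinearMap ξ.toLinearMap ∘ₗ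
      (Coalgebra.comul ∘ₗ zetaF jA jH ξ)
      = TensorProduct.map ξ.toLinearMap ξ.toLinearMap ∘ₗ
          (TensorProduct.map (zetaF jA jH ξ) (zetaF jA jH ξ) ∘ₗ Coalgebra.comul) := by
    have hL3 : Coalgebra.comul ∘ₗ ξ.toLinearMap
        = TensorProduct.map ξ.toLinearMap ξ.toLinearMap ∘ₗ Coalgebra.comul := by
      rw [aux_xi_eq jA jH ξ hξ]
      exact aux_key_comul_mul jA jH
    have hL4 := aux_key_comul_mul jH jA
    calc TensorProduct.map ξ.toLinearMap ξ.toLinearMap ∘ₗ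
          (Coalgebra.comul ∘ₗ zetaF jA jH ξ)
        = (TensorProduct.map ξ.toLinearMap ξ.toLinearMap ∘ₗ Coalgebra.comul) ∘ₗ
            zetaF jA jH ξ := by rw [LinearMap.comp_assoc]
      _ = (Coalgebra.comul ∘ₗ ξ.toLinearMap) ∘ₗ zetaF jA jH ξ := by rw [hL3]
      _ = Coalgebra.comul ∘ₗ (ξ.toLinearMap ∘ₗ zetaF jA jH ξ) := by
            rw [LinearMap.comp_assoc]
      _ = Coalgebra.comul ∘ₗ (LinearMap.mul' k X ∘ₗ
            TensorProduct.map (jH : H →ₗ[k] X) (jA : A →ₗ[k] X)) := by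
            rw [aux_xi_comp_zetaF]
      _ = TensorProduct.map
            (LinearMap.mul' k X ∘ₗ TensorProduct.map (jH : H →ₗ[k] X) (jA : A →ₗ[k] X))
            (LinearMap.mul' k X ∘ₗ TensorProduct.map (jH : H →ₗ[k] X) (jA : A →ₗ[k] X))
            ∘ₗ Coalgebra.comul := hL4
      _ = TensorProduct.map
            (ξ.toLinearMap ∘ₗ zetaF jA jH ξ) (ξ.toLinearMap ∘ₗ zetaF jA jH ξ)
            ∘ₗ Coalgebra.comul := by rw [aux_xi_comp_zetaF]
      _ = (TensorProduct.map ξ.toLinearMap ξ.toLinearMap ∘ₗ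
            TensorProduct.map (zetaF jA jH ξ) (zetaF jA jH ξ)) ∘ₗ Coalgebra.comul := by
            rw [TensorProduct.map_comp]
      _ = TensorProduct.map ξ.toLinearMap ξ.toLinearMap ∘ₗ
            (TensorProduct.map (zetaF jA jH ξ) (zetaF jA jH ξ) ∘ₗ Coalgebra.comul) := by
            rw [LinearMap.comp_assoc]
  exact LinearMap.congr_fun e1 t

/-- The key identity: zetaAB = zetaF. -/
lemma aux_zetaAB_eq (hξ : ∀ (a : A) (h : H), ξ (a ⊗ₜ[k] h) = jA a * jH h) :
    zetaAB jA jH ξ = zetaF jA jH ξ := by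
  have hcomp : ξ.toLinearMap ∘ₗ zetaAB jA jH ξ = ξ.toLinearMap ∘ₗ zetaF jA jH ξ := by
    calc ξ.toLinearMap ∘ₗ zetaAB jA jH ξ
        = (LinearMap.mul' k X ∘ₗ TensorProduct.map (jA : A →ₗ[k] X) (jH : H →ₗ[k] X)) ∘ₗ
            TensorProduct.map (alphaF jA jH ξ) (betaF jA jH ξ) ∘ₗ Coalgebra.comul := by
          rw [zetaAB, aux_xi_eq jA jH ξ hξ]
      _ = LinearMap.mul' k X ∘ₗ
            TensorProduct.map ((jA : A →ₗ[k] X) ∘ₗ alphaF jA jH ξ)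
              ((jH : H →ₗ[k] X) ∘ₗ betaF jA jH ξ) ∘ₗ Coalgebra.comul := by
          rw [TensorProduct.map_comp, LinearMap.comp_assoc, LinearMap.comp_assoc]
      _ = LinearMap.mul' k X ∘ₗ
            (TensorProduct.map
              ((jA : A →ₗ[k] X) ∘ₗ (TensorProduct.rid k A).toLinearMap ∘ₗ
                TensorProduct.map LinearMap.id Coalgebra.counit)
              ((jH : H →ₗ[k] X) ∘ₗ (TensorProduct.lid k H).toLinearMap ∘ₗ
                TensorProduct.map Coalgebra.counit LinearMap.id) ∘ₗ
             TensorProduct.map (zetaF jA jH ξ) (zetaF jA jH ξ)) ∘ₗ Coalgebra.comul := by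
          rw [← TensorProduct.map_comp]
          simp only [alphaF, betaF, LinearMap.comp_assoc]
      _ = LinearMap.mul' k X ∘ₗ
            TensorProduct.map
              ((jA : A →ₗ[k] X) ∘ₗ (TensorProduct.rid k A).toLinearMap ∘ₗ
                TensorProduct.map LinearMap.id Coalgebra.counit)
              ((jH : H →ₗ[k] X) ∘ₗ (TensorProduct.lid k H).toLinearMap ∘ₗ
                TensorProduct.map Coalgebra.counit LinearMap.id) ∘ₗ
            (Coalgebra.comul ∘ₗ zetaF jA jH ξ) := by
          rw [aux_zetaF_comul jA jH ξ hξ]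
          simp only [LinearMap.comp_assoc]
      _ = (LinearMap.mul' k X ∘ₗ
            TensorProduct.map
              ((jA : A →ₗ[k] X) ∘ₗ (TensorProduct.rid k A).toLinearMap ∘ₗ
                TensorProduct.map LinearMap.id Coalgebra.counit)
              ((jH : H →ₗ[k] X) ∘ₗ (TensorProduct.lid k H).toLinearMap ∘ₗ
                TensorProduct.map Coalgebra.counit LinearMap.id) ∘ₗ
            Coalgebra.comul) ∘ₗ zetaF jA jH ξ := by
          simp only [LinearMap.comp_assoc]
      _ = (LinearMap.mul' k X ∘ₗ
            TensorProduct.map (jA : A →ₗ[k] X) (jH : H →ₗ[k] X)) ∘ₗ zetaF jA jH ξ := by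
          rw [aux_key_counit jA jH]
      _ = ξ.toLinearMap ∘ₗ zetaF jA jH ξ := by rw [← aux_xi_eq jA jH ξ hξ]
  refine LinearMap.ext fun t => ξ.injective ?_
  exact LinearMap.congr_fun hcomp t

lemma aux_inner_eval (hξ : ∀ (a : A) (h : H), ξ (a ⊗ₜ[k] h) = jA a * jH h)
    (a : A) (h' : H) (w : A ⊗[k] H) :
    ξ (TensorProduct.map (LinearMap.mul' k A) LinearMap.id
        ((TensorProduct.assoc k A A H).symm
          (a ⊗ₜ[k] (TensorProduct.map LinearMap.id (LinearMap.mul' k H)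
            ((TensorProduct.assoc k A H H) (w ⊗ₜ[k] h'))))))
      = jA a * ξ w * jH h' := by
  induction w using TensorProduct.induction_on with
  | zero => simp
  | tmul c d =>
    simp only [TensorProduct.assoc_tmul, TensorProduct.map_tmul, LinearMap.id_coe, id_eq,
      LinearMap.mul'_apply, TensorProduct.tmul_zero, TensorProduct.assoc_symm_tmul]
    rw [hξ, hξ]
    simp [mul_assoc]
  | add x y hx hy =>
    simp only [TensorProduct.add_tmul, TensorProduct.tmul_add, map_add, hx, hy, add_mul, mul_add]

lemma aux_mD_tmul_eval (hξ : ∀ (a : A) (h : H), ξ (a ⊗ₜ[k] h) = jA a * jH h)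
    (u v : A ⊗[k] H) :
    mD jA jH ξ (u ⊗ₜ[k] v) = ξ.symm (ξ u * ξ v) := by
  induction u using TensorProduct.induction_on with
  | zero => simp [TensorProduct.zero_tmul]
  | add x y hx hy => simp [TensorProduct.add_tmul, map_add, add_mul, hx, hy]
  | tmul a h =>
    induction v using TensorProduct.induction_on with
    | zero => simp [TensorProduct.tmul_zero]
    | add x y hx hy => simp [TensorProduct.tmul_add, map_add, mul_add, hx, hy]
    | tmul a' h' =>
      rw [LinearEquiv.eq_symm_apply]
      have hz : zetaF jA jH ξ (h ⊗ₜ[k] a') = ξ.symm (jH h * jA a') := by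
        simp [zetaF]
      simp only [mD, aux_zetaAB_eq jA jH ξ hξ, LinearMap.coe_comp, Function.comp_apply,
        LinearEquiv.coe_coe, TensorProduct.assoc_tmul, TensorProduct.map_tmul,
        TensorProduct.assoc_symm_tmul, LinearMap.id_coe, id_eq]
      rw [aux_inner_eval jA jH ξ hξ, hz, LinearEquiv.apply_symm_apply, hξ, hξ]
      simp [mul_assoc]

/-- m_D is associative with unit 1_A ⊗ 1_H. -/
theorem mD_assoc_unit (jA : A →ₐc[k] X) (jH : H →ₐc[k] X)
    (ξ : (A ⊗[k] H) ≃ₗ[k] X)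
    (hξ : ∀ (a : A) (h : H), ξ (a ⊗ₜ[k] h) = jA a * jH h) :
    mD jA jH ξ ∘ₗ TensorProduct.map (mD jA jH ξ) LinearMap.id
      = mD jA jH ξ ∘ₗ TensorProduct.map LinearMap.id (mD jA jH ξ) ∘ₗ
          (TensorProduct.assoc k (A ⊗[k] H) (A ⊗[k] H) (A ⊗[k] H)).toLinearMap ∧
    ∀ u : A ⊗[k] H,
      mD jA jH ξ (((1 : A) ⊗ₜ[k] (1 : H)) ⊗ₜ[k] u) = u ∧
      mD jA jH ξ (u ⊗ₜ[k] ((1 : A) ⊗ₜ[k] (1 : H))) = u := by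
  have heval := aux_mD_tmul_eval jA jH ξ hξ
  constructor
  · apply TensorProduct.ext'
    intro x w
    induction x using TensorProduct.induction_on with
    | zero => simp [TensorProduct.zero_tmul]
    | add x y hx hy => simp only [TensorProduct.add_tmul, map_add, hx, hy]
    | tmul u v =>
      simp only [LinearMap.coe_comp, Function.comp_apply, TensorProduct.map_tmul,
        LinearMap.id_coe, id_eq, LinearEquiv.coe_coe, TensorProduct.assoc_tmul]
      rw [heval u v, heval v w, heval, heval, LinearEquiv.apply_symm_apply,
        LinearEquiv.apply_symm_apply, mul_assoc]
  · intro u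
    have h1 : ξ ((1 : A) ⊗ₜ[k] (1 : H)) = 1 := by rw [hξ]; simp
    exact ⟨by rw [heval, h1, one_mul, LinearEquiv.symm_apply_apply],
           by rw [heval, h1, mul_one, LinearEquiv.symm_apply_apply]⟩

end
end
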